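/- arXiv:0802.0806 — 3 statements merged into one kernel-verified Lean document; each statement's English description precedes it below -/
import Mathlib

section
/- Let G be a group and M a G-module (abelian group with G-action). If there is a central element z of G that acts on M as multiplication by -1, then the group cohomology H²(G, M) is annihilated by 2. -/
open groupCohomology

/-- The key cocycle computation: if a central `z` acts as `-1`, then twice any
2-cocycle is the coboundary of `g ↦ f (g, z) - f (z, g)`. -/
lemma center_kills_dOne {G : Type} [Group G] (M : Rep ℤ G) (z : G)
    (hz : z ∈ Subgroup.center G) (hact : ∀ m : M, M.ρ z m = -m)
    (f : cocycles₂ M) :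
    (d₁₂ M).hom (fun t => f (t, z) - f (z, t)) = (f : G × G → M.V) + f := by
  have hcomm := Subgroup.mem_center_iff.1 hz
  have hf := (mem_cocycles₂_def (f : G × G → M.V)).1 f.2
  funext p
  obtain ⟨g, h⟩ := p
  have h1 := hf g h z
  have h2 := hf g z h
  have h3 := hf z g h
  have h4 : M.ρ z (f (g, h)) + f (g, h) = 0 := by rw [hact]; abel
  rw [hcomm h] at h1
  rw [hcomm g] at h2
  simp only [d₁₂_hom_apply, map_sub, Pi.add_apply]
  rw [← sub_eq_zero]
  have key : M.ρ g (f (h, z)) - M.ρ g (f (z, h)) - (f (g * h, z) - f (z, g * h))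
        + (f (g, z) - f (z, g)) - (f (g, h) + f (g, h)) =
      (M.ρ g (f (h, z)) - f (g * h, z) + f (g, z * h) - f (g, h))
      - (M.ρ g (f (z, h)) - f (z * g, h) + f (g, z * h) - f (g, z))
      + (M.ρ z (f (g, h)) - f (z * g, h) + f (z, g * h) - f (z, g))
      - (M.ρ z (f (g, h)) + f (g, h)) := by
    abel
  rw [key, h1, h2, h3, h4]
  abel

/-- "center kills".  Let `G` be a group and `M` a `G`-module.  If some
central element `z` of `G` acts on `M` as multiplication by `-1`, then the group
cohomology `H²(G, M)` is annihilated by `2`. -/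
theorem center_kills_H2 (G : Type) [Group G] (M : Rep ℤ G) (z : G)
    (hz : z ∈ Subgroup.center G) (hact : ∀ m : M, M.ρ z m = -m) :
    ∀ x : groupCohomology M 2, (2 : ℤ) • x = 0 := by
  have key : ∀ y : H2 M, (2 : ℤ) • y = 0 := by
    intro y
    induction y using H2_induction_on with | h f => ?_
    rw [two_zsmul, ← map_add, H2π_eq_zero_iff]
    refine ⟨fun t => f (t, z) - f (z, t), ?_⟩
    show (d₁₂ M).hom (fun t => f (t, z) - f (z, t)) = (f : G × G → M.V) + f
    exact center_kills_dOne M z hz hact f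
  intro x
  have e := LinearEquiv.refl ℤ (H2 M)
  apply e.injective
  have h2x := key (e x)
  rw [two_zsmul] at h2x
  rw [two_zsmul, map_add, map_zero]
  exact h2x
end

section
/- Let Γ be a group and for each n ≥ 1 let DⁿΓ be the set of g ∈ Γ such that some positive power of g lies in the n-th term LⁿΓ of the lower central series. Then DⁿΓ is a subgroup of Γ, it is normal (indeed characteristic), and Γ/DⁿΓ is torsion-free. -/
universe u

open scoped commutatorElement

lemma lcs_map_surjective {G H : Type*} [Group G] [Group H] (f : G →* H)
    (hf : Function.Surjective f) (n : ℕ) :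
    (Subgroup.lowerCentralSeries (⊤ : Subgroup G) n).map f = Subgroup.lowerCentralSeries (⊤ : Subgroup H) n := by
  induction n with
  | zero => simpa [Subgroup.lowerCentralSeries] using (Subgroup.map_top_of_surjective f hf)
  | succ n ih =>
      show ((⁅Subgroup.lowerCentralSeries (⊤ : Subgroup G) n, ⊤⁆ : Subgroup G)).map f = ⁅Subgroup.lowerCentralSeries (⊤ : Subgroup H) n, ⊤⁆
      rw [Subgroup.map_commutator, ih, Subgroup.map_top_of_surjective f hf]

/-- In a group whose lower central series reaches `⊥`, the product of two torsion
elements is torsion (P. Hall's argument). -/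
lemma key_torsion (n : ℕ) : ∀ (G : Type u) [Group G], Subgroup.lowerCentralSeries (⊤ : Subgroup G) n = ⊥ →
    ∀ (x y : G) (a b : ℕ), 0 < a → 0 < b → x ^ a = 1 → y ^ b = 1 →
    ∃ m : ℕ, 0 < m ∧ (x * y) ^ m = 1 := by
  induction n with
  | zero =>
      intro G _ hG x y a b ha hb hx hy
      have : (x*y) ∈ (⊥ : Subgroup G) := hG ▸ Subgroup.mem_top _
      exact ⟨1, one_pos, by simpa using this⟩
  | succ n ih =>
      intro G _ hG x y a b ha hb hx hy
      -- reduce to the subgroup generated by x and y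
      set H : Subgroup G := Subgroup.closure {x, y} with hH
      have hxH : x ∈ H := Subgroup.subset_closure (by simp)
      have hyH : y ∈ H := Subgroup.subset_closure (by simp [Set.mem_insert_iff])
      have hLH : Subgroup.lowerCentralSeries (⊤ : Subgroup H) (n+1) = ⊥ := by
        have h1 := Subgroup.lowerCentralSeries_map_subtype_le H (n+1)
        rw [hG] at h1
        exact (Subgroup.map_eq_bot_iff_of_injective _ H.subtype_injective).mp (le_bot_iff.mp h1)
      set x' : H := ⟨x, hxH⟩
      set y' : H := ⟨y, hyH⟩
      suffices h : ∃ m : ℕ, 0 < m ∧ (x' * y') ^ m = 1 by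
        obtain ⟨m, hm, hme⟩ := h
        exact ⟨m, hm, by simpa using congrArg (Subgroup.subtype H) hme⟩
      have hx' : x' ^ a = 1 := by ext; simpa using hx
      have hy' : y' ^ b = 1 := by ext; simpa using hy
      -- every subgroup of H containing x' and y' is all of H
      have hgen : ∀ K : Subgroup H, x' ∈ K → y' ∈ K → ∀ w : H, w ∈ K := by
        intro K hxK hyK w
        have htop : Subgroup.closure (H.subtype ⁻¹' ({x, y} : Set G)) = ⊤ :=
          Subgroup.closure_preimage_eq_top ({x, y} : Set G)
        have hle : Subgroup.closure (H.subtype ⁻¹' ({x, y} : Set G)) ≤ K := by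
          rw [Subgroup.closure_le]
          rintro ⟨g, hg⟩ hmem
          rcases hmem with h | h
          · have : (⟨g, hg⟩ : H) = x' := Subtype.ext h
            rw [this]; exact hxK
          · have : (⟨g, hg⟩ : H) = y' := Subtype.ext h
            rw [this]; exact hyK
        exact hle (htop ▸ Subgroup.mem_top w)
      clear_value x' y'
      clear hx hy hxH hyH
      rcases n with _ | n
      · -- H is abelian
        have hcomm : Commute x' y' := by
          have h0 : ⁅x', y'⁆ ∈ (⊥ : Subgroup H) := by
            rw [← hLH]
            exact Subgroup.commutator_mem_commutator (Subgroup.mem_top _) (Subgroup.mem_top _)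
          exact commutatorElement_eq_one_iff_commute.mp (by simpa using h0)
        have h1 : x' ^ (a*b) = 1 := by rw [pow_mul, hx', one_pow]
        have h2 : y' ^ (a*b) = 1 := by rw [mul_comm, pow_mul, hy', one_pow]
        exact ⟨a*b, Nat.mul_pos ha hb, by rw [hcomm.mul_pow, h1, h2, one_mul]⟩
      · -- the last nontrivial term of the series is central
        have hcent : Subgroup.lowerCentralSeries (⊤ : Subgroup H) (n+1) ≤ Subgroup.center H := by
          have h0 : (⁅Subgroup.lowerCentralSeries (⊤ : Subgroup H) (n+1), (⊤ : Subgroup H)⁆ : Subgroup H) = ⊥ := hLH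
          have h2 := Subgroup.commutator_eq_bot_iff_le_centralizer.mp h0
          rwa [Subgroup.coe_top, Subgroup.centralizer_univ] at h2
        set N := Subgroup.lowerCentralSeries (⊤ : Subgroup H) (n+1) with hN
        have hQ : Subgroup.lowerCentralSeries (⊤ : Subgroup (H ⧸ N)) (n+1) = ⊥ := by
          rw [← lcs_map_surjective (QuotientGroup.mk' N) (QuotientGroup.mk'_surjective N),
            Subgroup.map_eq_bot_iff, QuotientGroup.ker_mk']
        obtain ⟨m, hm, hme⟩ := ih (H ⧸ N) hQ ((QuotientGroup.mk' N) x') ((QuotientGroup.mk' N) y')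
          a b ha hb (by rw [← map_pow, hx', map_one]) (by rw [← map_pow, hy', map_one])
        have hz : (x' * y') ^ m ∈ N := by
          rw [← QuotientGroup.ker_mk' N, MonoidHom.mem_ker, map_pow, map_mul]
          exact hme
        set e := a * b with he
        have hepos : 0 < e := Nat.mul_pos ha hb
        have hcc : ∀ p : H, p ∈ Subgroup.lowerCentralSeries (⊤ : Subgroup H) n → ∀ q : H,
            ⁅p, q⁆ ∈ Subgroup.center H := fun p hp q =>
          hcent (Subgroup.commutator_mem_commutator hp (Subgroup.mem_top q))
        have hadd : ∀ p : H, p ∈ Subgroup.lowerCentralSeries (⊤ : Subgroup H) n →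
            ∀ q r : H, ⁅p, q * r⁆ = ⁅p, q⁆ * ⁅p, r⁆ := by
          intro p hp q r
          have h1 : ⁅p, q * r⁆ = ⁅p, q⁆ * (q * ⁅p, r⁆ * q⁻¹) := by
            simp only [commutatorElement_def]; group
          rw [h1, Subgroup.mem_center_iff.mp (hcc p hp r) q]
          group
        have hpowc : ∀ p : H, p ∈ Subgroup.lowerCentralSeries (⊤ : Subgroup H) n → ∀ (q : H) (j : ℕ),
            ⁅p, q ^ j⁆ = ⁅p, q⁆ ^ j := by
          intro p hp q j
          induction j with
          | zero => simp
          | succ j ihj => rw [pow_succ, hadd p hp, ihj, pow_succ]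
        -- the subgroup of central elements killed by e
        set S : Subgroup H :=
          { carrier := {w : H | w ∈ Subgroup.center H ∧ w ^ e = 1}
            one_mem' := ⟨Subgroup.one_mem _, one_pow e⟩
            mul_mem' := by
              rintro u v ⟨hu, hue⟩ ⟨hv, hve⟩
              refine ⟨Subgroup.mul_mem _ hu hv, ?_⟩
              have hc : Commute u v := Subgroup.mem_center_iff.mp hv u
              rw [hc.mul_pow, hue, hve, one_mul]
            inv_mem' := by
              rintro u ⟨hu, hue⟩
              exact ⟨Subgroup.inv_mem _ hu, by rw [inv_pow, hue, inv_one]⟩ } with hS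
        have hNS : N ≤ S := by
          rw [hN, Subgroup.lowerCentralSeries_succ, Subgroup.commutator_def, Subgroup.closure_le]
          rintro c ⟨p, hp, q, -, rfl⟩
          refine ⟨hcc p hp q, ?_⟩
          -- show ⁅p, q⁆ ^ e = 1 for all q, via a subgroup argument
          set K : Subgroup H :=
            { carrier := {q : H | ⁅p, q⁆ ^ e = 1}
              one_mem' := by simp
              mul_mem' := by
                rintro u v hu hv
                show ⁅p, u * v⁆ ^ e = 1
                have hc : Commute ⁅p, u⁆ ⁅p, v⁆ :=
                  (Subgroup.mem_center_iff.mp (hcc p hp v) ⁅p, u⁆)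
                rw [hadd p hp, hc.mul_pow, hu, hv, one_mul]
              inv_mem' := by
                rintro u hu
                show ⁅p, u⁻¹⁆ ^ e = 1
                have h1 : ⁅p, u⁆ * ⁅p, u⁻¹⁆ = 1 := by
                  rw [← hadd p hp, mul_inv_cancel, commutatorElement_one_right]
                rw [eq_inv_of_mul_eq_one_right h1, inv_pow, hu, inv_one] } with hK
          have hxK : x' ∈ K := by
            show ⁅p, x'⁆ ^ e = 1
            rw [he, pow_mul, ← hpowc p hp, hx', commutatorElement_one_right, one_pow]
          have hyK : y' ∈ K := by
            show ⁅p, y'⁆ ^ e = 1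
            rw [he, mul_comm a b, pow_mul, ← hpowc p hp, hy', commutatorElement_one_right, one_pow]
          exact hgen K hxK hyK q
        obtain ⟨-, hze⟩ := hNS hz
        exact ⟨m * e, Nat.mul_pos hm hepos, by rw [pow_mul, hze]⟩


/-- For a group `Γ` let `DⁿΓ` be the set of `g ∈ Γ` some positive power
of which lies in the `n`-th term of the lower central series (`L¹Γ = Γ`, i.e. index `n`
corresponds to `lowerCentralSeries Γ n` with Mathlib's `0`-based indexing).  Then `DⁿΓ`
is a subgroup, it is normal (indeed characteristic), and `Γ/DⁿΓ` is torsion-free (i.e.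
`DⁿΓ` is closed under taking roots). -/
theorem rational_dimension_subgroup (Γ : Type*) [Group Γ] (n : ℕ) :
    ∃ D : Subgroup Γ,
      (D : Set Γ) = {g : Γ | ∃ m : ℕ, 0 < m ∧ g ^ m ∈ Subgroup.lowerCentralSeries (⊤ : Subgroup Γ) n} ∧
      D.Normal ∧ D.Characteristic ∧
      (∀ (g : Γ) (m : ℕ), 0 < m → g ^ m ∈ D → g ∈ D) := by
  set L := Subgroup.lowerCentralSeries (⊤ : Subgroup Γ) n with hL
  have hQ : Subgroup.lowerCentralSeries (⊤ : Subgroup (Γ ⧸ L)) n = ⊥ := by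
    rw [← lcs_map_surjective (QuotientGroup.mk' L) (QuotientGroup.mk'_surjective L),
      Subgroup.map_eq_bot_iff, QuotientGroup.ker_mk']
  have hmem : ∀ (g : Γ) (m : ℕ), g ^ m ∈ L ↔ ((QuotientGroup.mk' L) g) ^ m = 1 := by
    intro g m
    rw [← map_pow, ← MonoidHom.mem_ker, QuotientGroup.ker_mk']
  refine ⟨{ carrier := {g : Γ | ∃ m : ℕ, 0 < m ∧ g ^ m ∈ L}
            one_mem' := ⟨1, one_pos, by simpa using Subgroup.one_mem L⟩
            mul_mem' := by
              rintro u v ⟨a, ha, hua⟩ ⟨b, hb, hvb⟩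
              obtain ⟨m, hm, hme⟩ := key_torsion n (Γ ⧸ L) hQ
                ((QuotientGroup.mk' L) u) ((QuotientGroup.mk' L) v) a b ha hb
                ((hmem u a).mp hua) ((hmem v b).mp hvb)
              exact ⟨m, hm, (hmem (u*v) m).mpr (by rw [map_mul]; exact hme)⟩
            inv_mem' := by
              rintro u ⟨a, ha, hua⟩
              exact ⟨a, ha, by rw [inv_pow]; exact Subgroup.inv_mem L hua⟩ }, rfl, ?_, ?_, ?_⟩
  · constructor
    rintro u ⟨a, ha, hua⟩ g
    exact ⟨a, ha, by rw [conj_pow]; exact Subgroup.Normal.conj_mem (Subgroup.lowerCentralSeries_normal ⊤ n) _ hua g⟩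
  · constructor
    intro ϕ
    have hmapeq : Subgroup.map ϕ.toMonoidHom L = L := by
      rw [hL]; exact lcs_map_surjective ϕ.toMonoidHom ϕ.surjective n
    have hfix : ∀ w : Γ, w ∈ L ↔ ϕ w ∈ L := by
      intro w
      constructor
      · intro hw
        rw [← hmapeq]
        exact Subgroup.mem_map_of_mem _ hw
      · intro hw
        rw [← hmapeq] at hw
        obtain ⟨u, hu, huw⟩ := hw
        have hu2 : u = w := ϕ.injective huw
        rwa [← hu2]
    ext g
    simp only [Subgroup.mem_comap]
    constructor
    · rintro ⟨a, ha, haL⟩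
      exact ⟨a, ha, (hfix _).mpr (by rw [map_pow]; exact haL)⟩
    · rintro ⟨a, ha, haL⟩
      exact ⟨a, ha, by rw [← map_pow]; exact (hfix _).mp haL⟩
  · rintro g m hm ⟨a, ha, haL⟩
    exact ⟨m * a, Nat.mul_pos hm ha, by rwa [pow_mul]⟩
end

section
/- Let Γ be a group, N a normal subgroup with Γ/N nilpotent, and S a set of primes. Define √[S]{N} = {g ∈ Γ : ∃ m > 0 with all prime divisors of m in S and g^m ∈ N}. Then √[S]{N} is a normal subgroup of Γ containing N. -/
open Subgroup
open scoped commutatorElement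

section helpers

variable {G : Type*} [Group G]

private lemma comm_central_left (g y z : G) (hz : z ∈ Subgroup.center G) :
    ⁅g * z, y⁆ = ⁅g, y⁆ := by
  have hzc : ∀ x : G, x * z = z * x := Subgroup.mem_center_iff.mp hz
  calc ⁅g * z, y⁆ = g * (z * y * z⁻¹) * g⁻¹ * y⁻¹ := by group
    _ = g * y * g⁻¹ * y⁻¹ := by rw [← hzc y, mul_inv_cancel_right]
    _ = ⁅g, y⁆ := (commutatorElement_def g y).symm

private lemma comm_central_right (g x z : G) (hz : z ∈ Subgroup.center G) :
    ⁅x, g * z⁆ = ⁅x, g⁆ := by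
  have hzc : ∀ w : G, w * z = z * w := Subgroup.mem_center_iff.mp hz
  calc ⁅x, g * z⁆ = x * g * (z * x⁻¹ * z⁻¹) * g⁻¹ * x⁻¹ * x := by group
    _ = x * g * x⁻¹ * g⁻¹ * x⁻¹ * x := by rw [← hzc x⁻¹, mul_inv_cancel_right]
    _ = ⁅x, g⁆ := by group

private lemma finite_commutatorSet_of_finite_quotient (K : Subgroup G)
    (hK : K ≤ Subgroup.center G) [Finite (G ⧸ K)] : Finite (commutatorSet G) := by
  have hsub : commutatorSet G ⊆
      Set.range (fun q : (G ⧸ K) × (G ⧸ K) => ⁅(Quotient.out q.1 : G), Quotient.out q.2⁆) := by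
    rintro x ⟨g₁, g₂, rfl⟩
    refine ⟨((g₁ : G ⧸ K), (g₂ : G ⧸ K)), ?_⟩
    show ⁅Quotient.out ((g₁ : G ⧸ K)), Quotient.out ((g₂ : G ⧸ K))⁆ = ⁅g₁, g₂⁆
    have h₁ : g₁⁻¹ * Quotient.out ((g₁ : G ⧸ K)) ∈ K := by
      rw [← QuotientGroup.eq]
      exact (Quotient.out_eq _).symm
    have h₂ : g₂⁻¹ * Quotient.out ((g₂ : G ⧸ K)) ∈ K := by
      rw [← QuotientGroup.eq]
      exact (Quotient.out_eq _).symm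
    have e₁ : Quotient.out ((g₁ : G ⧸ K)) = g₁ * (g₁⁻¹ * Quotient.out ((g₁ : G ⧸ K))) := by
      group
    have e₂ : Quotient.out ((g₂ : G ⧸ K)) = g₂ * (g₂⁻¹ * Quotient.out ((g₂ : G ⧸ K))) := by
      group
    rw [e₁, e₂, comm_central_left _ _ _ (hK h₁), comm_central_right _ _ _ (hK h₂)]
  exact (Set.Finite.subset (Set.finite_range _) hsub).to_subtype

end helpers

universe u

private theorem finite_closure_pair (G : Type u) [Group G] [Group.IsNilpotent G] :
    ∀ a b : G, (∃ m, 0 < m ∧ a ^ m = 1) → (∃ n, 0 < n ∧ b ^ n = 1) →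
      Finite (Subgroup.closure ({a, b} : Set G)) := by
  refine nilpotent_center_quotient_ind
    (P := fun G _ _ => ∀ a b : G, (∃ m, 0 < m ∧ a ^ m = 1) → (∃ n, 0 < n ∧ b ^ n = 1) →
      Finite (Subgroup.closure ({a, b} : Set G))) G ?_ ?_
  · intro G _ _ a b _ _
    haveI : Finite G := Finite.of_subsingleton
    infer_instance
  · intro G _ _ IH a b ⟨m, hm, ha⟩ ⟨n, hn, hb⟩
    classical
    set Z := Subgroup.center G with hZ
    let π : G →* G ⧸ Z := QuotientGroup.mk' Z
    have h1 : Finite (Subgroup.closure ({π a, π b} : Set (G ⧸ Z))) := by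
      refine IH (π a) (π b) ⟨m, hm, ?_⟩ ⟨n, hn, ?_⟩
      · rw [← map_pow, ha, map_one]
      · rw [← map_pow, hb, map_one]
    set H := Subgroup.closure ({a, b} : Set G) with hH
    have haH : a ∈ H := Subgroup.subset_closure (by simp)
    have hbH : b ∈ H := Subgroup.subset_closure (by simp)
    let φ : ↥H →* G ⧸ Z := π.comp H.subtype
    have hrange : φ.range = Subgroup.closure ({π a, π b} : Set (G ⧸ Z)) := by
      rw [MonoidHom.range_comp, Subgroup.range_subtype, MonoidHom.map_closure,
        Set.image_pair]
    haveI : Finite ↥(φ.range) := by rw [hrange]; exact h1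
    haveI : Finite (↥H ⧸ φ.ker) :=
      Finite.of_equiv _ (QuotientGroup.quotientKerEquivRange φ).symm.toEquiv
    have hker : φ.ker ≤ Subgroup.center ↥H := by
      intro x hx
      have hxZ : (x : G) ∈ Subgroup.center G := by
        have := MonoidHom.mem_ker.mp hx
        exact (QuotientGroup.eq_one_iff (x : G)).mp this
      rw [Subgroup.mem_center_iff]
      intro y
      exact Subtype.ext (Subgroup.mem_center_iff.mp hxZ (y : G))
    haveI : Finite (commutatorSet ↥H) := finite_commutatorSet_of_finite_quotient φ.ker hker
    haveI : Finite ↥({a, b} : Set G) :=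
      ((Set.finite_singleton b).insert a).to_subtype
    haveI : Group.FG ↥H := Group.closure_finite_fg _
    have hsurj : Function.Surjective (Abelianization.of (G := ↥H)) := fun x =>
      QuotientGroup.induction_on x fun g => ⟨g, rfl⟩
    haveI : Group.FG (Abelianization ↥H) := Group.fg_of_surjective hsurj
    set α : ↥H := ⟨a, haH⟩
    set β : ↥H := ⟨b, hbH⟩
    have hαm : α ^ m = 1 := by
      apply Subtype.ext
      push_cast
      exact ha
    have hβn : β ^ n = 1 := by
      apply Subtype.ext
      push_cast
      exact hb
    have htop : (⊤ : Subgroup ↥H) = Subgroup.closure {α, β} := by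
      apply Subgroup.map_injective H.subtype_injective
      rw [MonoidHom.map_closure, Set.image_pair]
      have h2 : (⊤ : Subgroup ↥H).map H.subtype = H := by
        rw [← MonoidHom.range_eq_map, Subgroup.range_subtype]
      rw [h2]
      rfl
    have htors : Monoid.IsTorsion (Abelianization ↥H) := by
      intro x
      obtain ⟨y, rfl⟩ := hsurj x
      have hy : y ∈ Subgroup.closure {α, β} := htop ▸ Subgroup.mem_top y
      have hmem : Abelianization.of y ∈
          Subgroup.closure ({Abelianization.of α, Abelianization.of β} :
            Set (Abelianization ↥H)) := by
        rw [← Set.image_pair, ← MonoidHom.map_closure]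
        exact Subgroup.mem_map_of_mem _ hy
      have hle : Subgroup.closure ({Abelianization.of α, Abelianization.of β} :
          Set (Abelianization ↥H)) ≤ CommGroup.torsion (Abelianization ↥H) := by
        rw [Subgroup.closure_le]
        rintro x (rfl | rfl)
        · exact (CommGroup.mem_torsion _).mpr
            (isOfFinOrder_iff_pow_eq_one.mpr ⟨m, hm, by rw [← map_pow, hαm, map_one]⟩)
        · exact (CommGroup.mem_torsion _).mpr
            (isOfFinOrder_iff_pow_eq_one.mpr ⟨n, hn, by rw [← map_pow, hβn, map_one]⟩)
      exact (CommGroup.mem_torsion _).mp (hle hmem)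
    haveI : Finite (Abelianization ↥H) := CommGroup.finite_of_fg_torsion _ htors
    haveI : Finite (↥H ⧸ commutator ↥H) := ‹Finite (Abelianization ↥H)›
    exact Finite.of_equiv _
      (Subgroup.groupEquivQuotientProdSubgroup (s := commutator ↥H)).symm

private theorem snum_mul_finite (G : Type*) [Group G] [Finite G] [Group.IsNilpotent G]
    (S : Set ℕ) (a b : G) (m n : ℕ) (hm : 0 < m) (hn : 0 < n)
    (hmS : ∀ p : ℕ, p.Prime → p ∣ m → p ∈ S) (hnS : ∀ p : ℕ, p.Prime → p ∣ n → p ∈ S)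
    (ha : a ^ m = 1) (hb : b ^ n = 1) :
    ∃ k : ℕ, 0 < k ∧ (∀ p : ℕ, p.Prime → p ∣ k → p ∈ S) ∧ (a * b) ^ k = 1 := by
  classical
  have h45 := (isNilpotent_of_finite_tfae (G := G)).out 0 4
  obtain ⟨e⟩ := h45.mp ‹Group.IsNilpotent G›
  let f := e.symm
  set ps := (Nat.card G).primeFactors.filter (· ∈ S) with hps
  set k := ∏ p ∈ ps, p ^ (Nat.card G).factorization p with hk
  have hk0 : 0 < k := by
    apply Finset.prod_pos
    intro p hp
    have : p.Prime := Nat.prime_of_mem_primeFactors (Finset.mem_filter.mp hp).1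
    exact pow_pos this.pos _
  have hkS : ∀ p : ℕ, p.Prime → p ∣ k → p ∈ S := by
    intro p hp hpk
    obtain ⟨q, hq, hpq⟩ := hp.prime.exists_mem_finset_dvd hpk
    have hq' := Finset.mem_filter.mp hq
    have hqp : q.Prime := Nat.prime_of_mem_primeFactors hq'.1
    have : p = q := (Nat.prime_dvd_prime_iff_eq hp hqp).mp (hp.dvd_of_dvd_pow hpq)
    exact this ▸ hq'.2
  refine ⟨k, hk0, hkS, ?_⟩
  have key : f ((a * b) ^ k) = 1 := by
    rw [map_pow, map_mul]
    funext p P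
    haveI : Fact (↑p : ℕ).Prime := ⟨Nat.prime_of_mem_primeFactors p.2⟩
    simp only [Pi.pow_apply, Pi.mul_apply, Pi.one_apply]
    by_cases hpS : (↑p : ℕ) ∈ S
    · -- the component's order divides card P, which divides k
      have hdvd : Nat.card ↥(P : Subgroup G) ∣ k := by
        rw [Sylow.card_eq_multiplicity]
        exact Finset.dvd_prod_of_mem _ (Finset.mem_filter.mpr ⟨p.2, hpS⟩)
      have := orderOf_dvd_natCard (f a p P * f b p P)
      exact orderOf_dvd_iff_pow_eq_one.mp (this.trans hdvd)
    · -- both components are trivial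
      have triv : ∀ (x : G) (mx : ℕ), 0 < mx → (∀ q : ℕ, q.Prime → q ∣ mx → q ∈ S) →
          x ^ mx = 1 → f x p P = 1 := by
        intro x mx hmx hmxS hx
        have h1 : (f x p P) ^ mx = 1 := by
          have : f (x ^ mx) = 1 := by rw [hx, map_one]
          calc (f x p P) ^ mx = (f x ^ mx) p P := by simp [Pi.pow_apply]
            _ = f (x ^ mx) p P := by rw [← map_pow]
            _ = 1 := by rw [this]; rfl
        obtain ⟨j, hj⟩ := P.isPGroup' (f x p P)
        have hord1 : orderOf (f x p P) ∣ mx := orderOf_dvd_iff_pow_eq_one.mpr h1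
        have hord2 : orderOf (f x p P) ∣ (↑p : ℕ) ^ j := orderOf_dvd_iff_pow_eq_one.mpr hj
        have hcop : Nat.Coprime ((↑p : ℕ) ^ j) mx := by
          apply Nat.Coprime.pow_left
          rw [Nat.Prime.coprime_iff_not_dvd (Fact.out)]
          intro hdvd
          exact hpS (hmxS _ (Fact.out) hdvd)
        have : orderOf (f x p P) = 1 :=
          Nat.dvd_one.mp (hcop ▸ Nat.dvd_gcd hord2 hord1)
        exact orderOf_eq_one_iff.mp this
      rw [triv a m hm hmS ha, triv b n hn hnS hb, one_mul, one_pow]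
  have := congrArg e key
  rwa [MulEquiv.apply_symm_apply, map_one] at this

private theorem snum_mul (G : Type u) [Group G] [Group.IsNilpotent G]
    (S : Set ℕ) (a b : G) (m n : ℕ) (hm : 0 < m) (hn : 0 < n)
    (hmS : ∀ p : ℕ, p.Prime → p ∣ m → p ∈ S) (hnS : ∀ p : ℕ, p.Prime → p ∣ n → p ∈ S)
    (ha : a ^ m = 1) (hb : b ^ n = 1) :
    ∃ k : ℕ, 0 < k ∧ (∀ p : ℕ, p.Prime → p ∣ k → p ∈ S) ∧ (a * b) ^ k = 1 := by
  set H := Subgroup.closure ({a, b} : Set G) with hH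
  have haH : a ∈ H := Subgroup.subset_closure (by simp)
  have hbH : b ∈ H := Subgroup.subset_closure (by simp)
  haveI : Finite ↥H := finite_closure_pair G a b ⟨m, hm, ha⟩ ⟨n, hn, hb⟩
  have hαm : (⟨a, haH⟩ : ↥H) ^ m = 1 := by apply Subtype.ext; push_cast; exact ha
  have hβn : (⟨b, hbH⟩ : ↥H) ^ n = 1 := by apply Subtype.ext; push_cast; exact hb
  obtain ⟨k, hk0, hkS, hk⟩ :=
    snum_mul_finite ↥H S ⟨a, haH⟩ ⟨b, hbH⟩ m n hm hn hmS hnS hαm hβn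
  refine ⟨k, hk0, hkS, ?_⟩
  have := congrArg (H.subtype) hk
  push_cast at this
  simpa using this

/-- Let `Γ` be a group, `N` a normal subgroup with `Γ/N` nilpotent, and
`S` a set of primes.  Then `√[S]{N} = {g ∈ Γ : ∃ m > 0 with supp(m) ⊆ S and g^m ∈ N}`
is a normal subgroup of `Γ` containing `N`. -/
theorem S_root_of_normal_subgroup (Γ : Type*) [Group Γ] (N : Subgroup Γ) [N.Normal]
    [Group.IsNilpotent (Γ ⧸ N)] (S : Set ℕ) (hS : ∀ p ∈ S, p.Prime) :
    ∃ R : Subgroup Γ, R.Normal ∧ N ≤ R ∧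
      (R : Set Γ) = {g : Γ | ∃ m : ℕ, 0 < m ∧
        (∀ p : ℕ, p.Prime → p ∣ m → p ∈ S) ∧ g ^ m ∈ N} := by
  have mem_one : ∀ g : Γ, g ∈ N → ∃ m : ℕ, 0 < m ∧
      (∀ p : ℕ, p.Prime → p ∣ m → p ∈ S) ∧ g ^ m ∈ N := by
    intro g hg
    exact ⟨1, one_pos, fun p hp hd => absurd (Nat.dvd_one.mp hd) hp.ne_one,
      by simpa using hg⟩
  refine ⟨{ carrier := {g : Γ | ∃ m : ℕ, 0 < m ∧
        (∀ p : ℕ, p.Prime → p ∣ m → p ∈ S) ∧ g ^ m ∈ N}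
            one_mem' := mem_one 1 N.one_mem
            mul_mem' := ?_
            inv_mem' := ?_ }, ⟨?_⟩, fun g hg => mem_one g hg, rfl⟩
  · rintro g₁ g₂ ⟨m, hm, hmS, hgm⟩ ⟨n, hn, hnS, hgn⟩
    have ha : ((g₁ : Γ ⧸ N)) ^ m = 1 := by
      rw [show ((g₁ : Γ ⧸ N)) ^ m = ((g₁ ^ m : Γ) : Γ ⧸ N) from rfl]
      exact (QuotientGroup.eq_one_iff _).mpr hgm
    have hb : ((g₂ : Γ ⧸ N)) ^ n = 1 := by
      rw [show ((g₂ : Γ ⧸ N)) ^ n = ((g₂ ^ n : Γ) : Γ ⧸ N) from rfl]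
      exact (QuotientGroup.eq_one_iff _).mpr hgn
    obtain ⟨k, hk0, hkS, hk⟩ :=
      snum_mul (Γ ⧸ N) S (g₁ : Γ ⧸ N) (g₂ : Γ ⧸ N) m n hm hn hmS hnS ha hb
    refine ⟨k, hk0, hkS, ?_⟩
    rw [← QuotientGroup.eq_one_iff]
    push_cast at hk ⊢
    exact hk
  · rintro g ⟨m, hm, hmS, hgm⟩
    exact ⟨m, hm, hmS, by rw [inv_pow]; exact N.inv_mem hgm⟩
  · rintro x ⟨m, hm, hmS, hxm⟩ g
    refine ⟨m, hm, hmS, ?_⟩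
    rw [conj_pow]
    exact Subgroup.Normal.conj_mem ‹N.Normal› _ hxm g
end
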